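/- arXiv:0812.4718 — 4 statements merged into one kernel-verified Lean document; each statement's English description precedes it below -/
import Mathlib

section
/- The energy H = ⟨M, ω⟩ is a first integral of the system Ṁ = M × ω, ṅ = k n × ω, where M = Jω − d⟨n,ω⟩n + dω (i.e., M = Iω + d n×(n×ω) with I = J − dE), assuming ⟨n,n⟩ = 1. -/
open Matrix

/-- The energy `H = ⟨M, ω⟩` is a first integral of the system
`Ṁ = M × ω`, `ṅ = k (n × ω)`, where `M = Jω − d⟨n,ω⟩n`, assuming `⟨n,n⟩ = 1`
and `Jᵢ > d > 0`. -/
theorem statement3 (J₁ J₂ J₃ d k : ℝ) (hd : 0 < d)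
    (h1 : d < J₁) (h2 : d < J₂) (h3 : d < J₃)
    (J : Matrix (Fin 3) (Fin 3) ℝ) (hJ : J = Matrix.diagonal ![J₁, J₂, J₃])
    (ω n : ℝ → Fin 3 → ℝ) (ω' : ℝ → Fin 3 → ℝ)
    (hω : ∀ t, HasDerivAt ω (ω' t) t)
    (hunit : ∀ t, n t ⬝ᵥ n t = 1)
    (M : ℝ → Fin 3 → ℝ)
    (hMdef : ∀ t, M t = J.mulVec (ω t) - (d * (n t ⬝ᵥ ω t)) • n t)
    (hM : ∀ t, HasDerivAt M (crossProduct (M t) (ω t)) t)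
    (hn : ∀ t, HasDerivAt n (k • crossProduct (n t) (ω t)) t) :
    ∀ t, HasDerivAt (fun s => M s ⬝ᵥ ω s) 0 t := by
  intro t
  -- componentwise derivatives
  have hωi : ∀ i, HasDerivAt (fun s => ω s i) (ω' t i) t :=
    fun i => hasDerivAt_pi.1 (hω t) i
  have hni : ∀ i, HasDerivAt (fun s => n s i) ((k • crossProduct (n t) (ω t)) i) t :=
    fun i => hasDerivAt_pi.1 (hn t) i
  have hMi : ∀ i, HasDerivAt (fun s => M s i) (crossProduct (M t) (ω t) i) t :=
    fun i => hasDerivAt_pi.1 (hM t) i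
  set n' : Fin 3 → ℝ := k • crossProduct (n t) (ω t) with hn'
  -- derivative of the dot product ⟨n, ω⟩
  have hdot : HasDerivAt (fun s => n s ⬝ᵥ ω s)
      (∑ i, (n' i * ω t i + n t i * ω' t i)) t := by
    simp only [dotProduct]
    exact HasDerivAt.fun_sum fun i _ => (hni i).mul (hωi i)
  -- derivative of the defining expression of M, componentwise
  have hg : ∀ i, HasDerivAt (fun s => (J.mulVec (ω s) - (d * (n s ⬝ᵥ ω s)) • n s) i)
      ((![J₁, J₂, J₃] i) * ω' t i -
        (d * (∑ j, (n' j * ω t j + n t j * ω' t j)) * n t i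
          + d * (n t ⬝ᵥ ω t) * n' i)) t := by
    intro i
    have h1 : HasDerivAt (fun s => (J.mulVec (ω s)) i) ((![J₁, J₂, J₃] i) * ω' t i) t := by
      have := (hωi i).const_mul (![J₁, J₂, J₃] i)
      simpa [hJ, Matrix.mulVec_diagonal] using this
    have h2 : HasDerivAt (fun s => (d * (n s ⬝ᵥ ω s)) * n s i)
        ((d * (∑ j, (n' j * ω t j + n t j * ω' t j))) * n t i
          + (d * (n t ⬝ᵥ ω t)) * n' i) t :=
      (hdot.const_mul d).mul (hni i)
    simpa [mul_assoc] using h1.fun_sub h2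
  -- uniqueness of derivatives gives componentwise equations
  have key : ∀ i, (![J₁, J₂, J₃] i) * ω' t i -
      (d * (∑ j, (n' j * ω t j + n t j * ω' t j)) * n t i
        + d * (n t ⬝ᵥ ω t) * n' i) = crossProduct (M t) (ω t) i := by
    intro i
    have hMi' : HasDerivAt (fun s => (J.mulVec (ω s) - (d * (n s ⬝ᵥ ω s)) • n s) i)
        (crossProduct (M t) (ω t) i) t := by
      have : (fun s => M s i) = fun s => (J.mulVec (ω s) - (d * (n s ⬝ᵥ ω s)) • n s) i := by
        funext s; rw [hMdef s]
      rw [← this]; exact hMi i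
    exact (hg i).unique hMi'
  -- derivative of H
  have hH : HasDerivAt (fun s => M s ⬝ᵥ ω s)
      (∑ i, (crossProduct (M t) (ω t) i * ω t i + M t i * ω' t i)) t := by
    simp only [dotProduct]
    exact HasDerivAt.fun_sum fun i _ => (hMi i).mul (hωi i)
  have e0 := key 0
  have e1 := key 1
  have e2 := key 2
  have hMv := hMdef t
  have hM0 := congrFun hMv 0
  have hM1 := congrFun hMv 1
  have hM2 := congrFun hMv 2
  convert hH using 1
  simp only [hn', hJ, crossProduct, dotProduct, Fin.sum_univ_three, Matrix.mulVec_diagonal,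
    Pi.smul_apply, Pi.sub_apply, smul_eq_mul, Matrix.cons_val_zero, Matrix.cons_val_one,
    Matrix.head_cons, Matrix.cons_val_two, Matrix.tail_cons, LinearMap.mk₂_apply,
    Matrix.cons_val', Matrix.empty_val', Matrix.cons_val_fin_one] at e0 e1 e2 hM0 hM1 hM2 ⊢
  rw [hM0, hM1, hM2]
  linear_combination (-(ω t 0)) * e0 + (-(ω t 1)) * e1 + (-(ω t 2)) * e2
end

section
/- If λ = Jᵢ (for i ∈ {1,2,3}), then the roots of the quadratic λΨ(z) + ψ(z) = 0 are c₁ = (2d − Aᵢ)/(d Aⱼ Aₖ) and c₂ = aᵢ = 1/(Aᵢ Jᵢ), where Ψ(z) = d det(A) z² − Tr(AJ) z + 2 and ψ(z) = (4 det J − d Tr(AJ)) z − (Tr J − 2d). -/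
/-- If `λ = Jᵢ` (for `i ∈ {1,2,3}`), then the roots of the quadratic
`λΨ(z) + ψ(z) = 0` are `c₁ = (2d − Aᵢ)/(d Aⱼ Aₖ)` and `c₂ = aᵢ = 1/(Aᵢ Jᵢ)`:
precisely, `Jᵢ·Ψ(z) + ψ(z) = Jᵢ·d·det(A)·(z − (2d−Aᵢ)/(dAⱼAₖ))·(z − 1/(AᵢJᵢ))`
as polynomials in `z`, for each cyclic permutation `(i,j,k)` of `(1,2,3)`. -/
theorem statement7 (J₁ J₂ J₃ d : ℝ)
    (A₁ A₂ A₃ detA detJ trAJ trJ : ℝ)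
    (hA₁ : A₁ = J₂ + J₃ - J₁) (hA₂ : A₂ = J₃ + J₁ - J₂) (hA₃ : A₃ = J₁ + J₂ - J₃)
    (hdetA : detA = A₁ * A₂ * A₃) (hdetJ : detJ = J₁ * J₂ * J₃)
    (htrAJ : trAJ = A₁ * J₁ + A₂ * J₂ + A₃ * J₃) (htrJ : trJ = J₁ + J₂ + J₃)
    (h₁ : d * A₁ * A₂ * A₃ * J₁ ≠ 0) (h₂ : d * A₁ * A₂ * A₃ * J₂ ≠ 0)
    (h₃ : d * A₁ * A₂ * A₃ * J₃ ≠ 0)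
    (Ψ ψ : ℝ → ℝ)
    (hΨ : ∀ z, Ψ z = d * detA * z ^ 2 - trAJ * z + 2)
    (hψ : ∀ z, ψ z = (4 * detJ - d * trAJ) * z - (trJ - 2 * d)) :
    (∀ z : ℝ, J₁ * Ψ z + ψ z
        = J₁ * d * detA * (z - (2 * d - A₁) / (d * A₂ * A₃)) * (z - 1 / (A₁ * J₁))) ∧
    (∀ z : ℝ, J₂ * Ψ z + ψ z
        = J₂ * d * detA * (z - (2 * d - A₂) / (d * A₃ * A₁)) * (z - 1 / (A₂ * J₂))) ∧
    (∀ z : ℝ, J₃ * Ψ z + ψ z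
        = J₃ * d * detA * (z - (2 * d - A₃) / (d * A₁ * A₂)) * (z - 1 / (A₃ * J₃))) := by
  have hd : d ≠ 0 := fun h => h₁ (by simp [h])
  have ha1 : A₁ ≠ 0 := fun h => h₁ (by simp [h])
  have ha2 : A₂ ≠ 0 := fun h => h₁ (by simp [h])
  have ha3 : A₃ ≠ 0 := fun h => h₁ (by simp [h])
  have hj1 : J₁ ≠ 0 := fun h => h₁ (by simp [h])
  have hj2 : J₂ ≠ 0 := fun h => h₂ (by simp [h])
  have hj3 : J₃ ≠ 0 := fun h => h₃ (by simp [h])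
  subst hA₁ hA₂ hA₃ hdetA hdetJ htrAJ htrJ
  refine ⟨fun z => ?_, fun z => ?_, fun z => ?_⟩ <;>
    rw [hΨ, hψ] <;> field_simp <;> ring
end

section
/- For i ∈ {1,2,3} and λ = Jᵢ, the root c₁ = (2d − Aᵢ)/(d Aⱼ Aₖ) satisfies c₁ < a₁ = 1/(A₁J₁), provided 0 < d < J₁ < J₂ < J₃ and A₃ > 0. -/
/-- For each `i ∈ {1,2,3}` (with `(i,j,k)` a permutation of `(1,2,3)`),
the root `c₁ = (2d − Aᵢ)/(d Aⱼ Aₖ)` satisfies `c₁ < a₁ = 1/(A₁J₁)`, provided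
`0 < d < J₁ < J₂ < J₃` and `A₃ > 0`. -/
theorem statement9 (J₁ J₂ J₃ d : ℝ)
    (hd : 0 < d) (h1 : d < J₁) (h2 : J₁ < J₂) (h3 : J₂ < J₃)
    (A₁ A₂ A₃ a₁ : ℝ)
    (hA₁ : A₁ = J₂ + J₃ - J₁) (hA₂ : A₂ = J₃ + J₁ - J₂) (hA₃ : A₃ = J₁ + J₂ - J₃)
    (hA₃pos : 0 < A₃) (ha₁ : a₁ = 1 / (A₁ * J₁)) :
    (2 * d - A₁) / (d * A₂ * A₃) < a₁ ∧
    (2 * d - A₂) / (d * A₃ * A₁) < a₁ ∧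
    (2 * d - A₃) / (d * A₁ * A₂) < a₁ := by
  have hJ1 : 0 < J₁ := hd.trans h1
  have hA1 : 0 < A₁ := by nlinarith
  have hA2 : 0 < A₂ := by nlinarith
  subst ha₁ hA₁ hA₂ hA₃
  rw [div_lt_div_iff₀ (by positivity) (by positivity),
      div_lt_div_iff₀ (by positivity) (by positivity),
      div_lt_div_iff₀ (by positivity) (by positivity)]
  have hd1 : 0 < J₁ - d := by linarith
  have h21 : 0 < J₂ - J₁ := by linarith
  have h31 : 0 < J₃ - J₁ := by linarith
  refine ⟨by nlinarith [mul_pos hd1 (show (0:ℝ) < 2*J₁*(J₂+J₃)+(J₃-J₂)^2-3*J₁^2 by nlinarith [sq_nonneg (J₃-J₂)]), mul_pos (mul_pos hJ1 h21) h31],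
          by nlinarith [mul_pos (mul_pos hA1 hd1) hA2],
          by nlinarith [mul_pos (mul_pos hA1 hd1) hA₃pos]⟩
end

section
/- If nᵢ² = (aᵢ−z₁)(aᵢ−z₂)/((aᵢ−aⱼ)(aᵢ−aₖ)) with 0 < a₁ < a₂ < a₃ pairwise distinct, then all three quantities nᵢ² are nonnegative if and only if (z₁,z₂) ∈ [a₁,a₂]×[a₂,a₃] ∪ [a₂,a₃]×[a₁,a₂]. -/
/-- If `qᵢ = (aᵢ−z₁)(aᵢ−z₂)/((aᵢ−aⱼ)(aᵢ−aₖ))` with `a₁ < a₂ < a₃`, then all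
three quantities `qᵢ` are nonnegative iff
`(z₁,z₂) ∈ [a₁,a₂]×[a₂,a₃] ∪ [a₂,a₃]×[a₁,a₂]`. -/
theorem statement12 (a₁ a₂ a₃ : ℝ) (h12 : a₁ < a₂) (h23 : a₂ < a₃) (z₁ z₂ : ℝ) :
    (0 ≤ (a₁ - z₁) * (a₁ - z₂) / ((a₁ - a₂) * (a₁ - a₃)) ∧
     0 ≤ (a₂ - z₁) * (a₂ - z₂) / ((a₂ - a₃) * (a₂ - a₁)) ∧
     0 ≤ (a₃ - z₁) * (a₃ - z₂) / ((a₃ - a₁) * (a₃ - a₂))) ↔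
    ((a₁ ≤ z₁ ∧ z₁ ≤ a₂) ∧ (a₂ ≤ z₂ ∧ z₂ ≤ a₃)) ∨
    ((a₂ ≤ z₁ ∧ z₁ ≤ a₃) ∧ (a₁ ≤ z₂ ∧ z₂ ≤ a₂)) := by
  have h13 : a₁ < a₃ := h12.trans h23
  have d₁ : (0:ℝ) < (a₁ - a₂) * (a₁ - a₃) := mul_pos_of_neg_of_neg (by linarith) (by linarith)
  have d₂ : (a₂ - a₃) * (a₂ - a₁) < 0 := mul_neg_of_neg_of_pos (by linarith) (by linarith)
  have d₃ : (0:ℝ) < (a₃ - a₁) * (a₃ - a₂) := mul_pos (by linarith) (by linarith)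
  rw [le_div_iff₀ d₁, le_div_iff₀ d₃, div_nonneg_iff]
  have hd₂ : ¬ (0:ℝ) ≤ (a₂ - a₃) * (a₂ - a₁) := not_le.mpr d₂
  constructor
  · rintro ⟨h1, h2, h3⟩
    have p1 : 0 ≤ (a₁ - z₁) * (a₁ - z₂) := by simpa using h1
    have p3 : 0 ≤ (a₃ - z₁) * (a₃ - z₂) := by simpa using h3
    have p2 : (a₂ - z₁) * (a₂ - z₂) ≤ 0 := by
      rcases h2 with ⟨hn, _⟩ | ⟨hn, _⟩
      · exact absurd ‹_› hd₂
      · exact hn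
    rcases mul_nonpos_iff.mp p2 with ⟨hx, hy⟩ | ⟨hx, hy⟩
    · -- z₁ ≤ a₂, a₂ ≤ z₂
      left
      refine ⟨⟨?_, by linarith⟩, by linarith, ?_⟩
      · nlinarith
      · nlinarith
    · -- a₂ ≤ z₁, z₂ ≤ a₂
      right
      refine ⟨⟨by linarith, ?_⟩, ?_, by linarith⟩
      · nlinarith
      · nlinarith
  · rintro (⟨⟨h1, h2⟩, h3, h4⟩ | ⟨⟨h1, h2⟩, h3, h4⟩) <;>
      refine ⟨by nlinarith, Or.inr ⟨by nlinarith, le_of_lt d₂⟩, by nlinarith⟩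
end
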